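/- For all positive constants β, E, δ, m, M, I there exists C₀ > 0 such that: for every T > 0, every p ∈ C¹([0,∞)) with m ≤ m_{p,T}, M_{p,T} ≤ M and I_{p,T} ≤ I, and every classical solution (v,u,θ) of the outer pressure problem on [0,1]×[0,T] with (E,δ)-bounded initial data, one has sup_{0≤t≤T} ∫₀¹ (u²/2 + (v − ln v) + (θ − ln θ))(x,t) dx + ∫₀ᵀ V(t) dt ≤ C₀. -/

import Mathlib

open MeasureTheory Set Filter
set_option maxHeartbeats 1000000

/-- The H¹(0,1) norm of a function `f` with (weak) derivative `f'`. -/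
noncomputable def H1norm (f f' : ℝ → ℝ) : ℝ :=
  Real.sqrt (∫ x in (0:ℝ)..1, ((f x) ^ 2 + (f' x) ^ 2))

/-- `p` is C¹ on `[0,∞)` with derivative `p'`, and `p` is positive there. -/
def PressureC1 (p p' : ℝ → ℝ) : Prop :=
  (∀ t ∈ Ici (0:ℝ), HasDerivWithinAt p (p' t) (Ici 0) t) ∧
  ContinuousOn p' (Ici 0) ∧ (∀ t ∈ Ici (0:ℝ), 0 < p t)

/-- Uniform pressure assumptions: `m ≤ p ≤ M` on `[0,∞)` and `∫₀^∞ |p'| ≤ I`. -/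
def UniformPressure (p p' : ℝ → ℝ) (m M I : ℝ) : Prop :=
  (∀ t ∈ Ici (0:ℝ), m ≤ p t ∧ p t ≤ M) ∧
  IntegrableOn (fun t => |p' t|) (Ici 0) ∧ (∫ t in Ici (0:ℝ), |p' t|) ≤ I

/-- `(E,δ)`-bounded initial data: the sum of the H¹ norms of `v₀, u₀, θ₀` is at most `E`
and `v₀ ≥ δ`, `θ₀ ≥ δ` on `[0,1]`.  (For a classical solution the spatial derivatives of
the initial data are `vx(·,0)`, `ux(·,0)`, `θx(·,0)`.) -/
def EdeltaBounded (E δ : ℝ) (v0 u0 θ0 : ℝ → ℝ) (vx ux θx : ℝ → ℝ → ℝ) : Prop :=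
  H1norm v0 (fun x => vx x 0) + H1norm u0 (fun x => ux x 0)
      + H1norm θ0 (fun x => θx x 0) ≤ E ∧
  (∀ x ∈ Icc (0:ℝ) 1, δ ≤ v0 x) ∧ (∀ x ∈ Icc (0:ℝ) 1, δ ≤ θ0 x)

/-- A classical solution `(v,u,θ)` of the outer pressure problem for the 1-D compressible
Navier–Stokes system on `[0,1] × Tset` (with `Tset = Icc 0 T` or `Tset = Ici 0`),
with heat conductivity `θ^β`, pressure boundary data `p`, and initial data `(v₀,u₀,θ₀)`.
The functions `vx, vt, ux, ut, uxx, θx, θt, θxx` are the corresponding partial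
derivatives. -/
structure OPSol (β : ℝ) (Tset : Set ℝ) (p v0 u0 θ0 : ℝ → ℝ)
    (v u θ vx vt ux ut uxx θx θt θxx : ℝ → ℝ → ℝ) : Prop where
  v_pos : ∀ x ∈ Icc (0:ℝ) 1, ∀ t ∈ Tset, 0 < v x t
  θ_pos : ∀ x ∈ Icc (0:ℝ) 1, ∀ t ∈ Tset, 0 < θ x t
  cont_v : ContinuousOn (fun q : ℝ × ℝ => v q.1 q.2) (Icc 0 1 ×ˢ Tset)
  cont_u : ContinuousOn (fun q : ℝ × ℝ => u q.1 q.2) (Icc 0 1 ×ˢ Tset)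
  cont_θ : ContinuousOn (fun q : ℝ × ℝ => θ q.1 q.2) (Icc 0 1 ×ˢ Tset)
  cont_vx : ContinuousOn (fun q : ℝ × ℝ => vx q.1 q.2) (Icc 0 1 ×ˢ Tset)
  cont_vt : ContinuousOn (fun q : ℝ × ℝ => vt q.1 q.2) (Icc 0 1 ×ˢ Tset)
  cont_ux : ContinuousOn (fun q : ℝ × ℝ => ux q.1 q.2) (Icc 0 1 ×ˢ Tset)
  cont_ut : ContinuousOn (fun q : ℝ × ℝ => ut q.1 q.2) (Icc 0 1 ×ˢ Tset)
  cont_uxx : ContinuousOn (fun q : ℝ × ℝ => uxx q.1 q.2) (Icc 0 1 ×ˢ Tset)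
  cont_θx : ContinuousOn (fun q : ℝ × ℝ => θx q.1 q.2) (Icc 0 1 ×ˢ Tset)
  cont_θt : ContinuousOn (fun q : ℝ × ℝ => θt q.1 q.2) (Icc 0 1 ×ˢ Tset)
  cont_θxx : ContinuousOn (fun q : ℝ × ℝ => θxx q.1 q.2) (Icc 0 1 ×ˢ Tset)
  hvx : ∀ t ∈ Tset, ∀ x ∈ Icc (0:ℝ) 1, HasDerivWithinAt (fun y => v y t) (vx x t) (Icc 0 1) x
  hvt : ∀ x ∈ Icc (0:ℝ) 1, ∀ t ∈ Tset, HasDerivWithinAt (fun s => v x s) (vt x t) Tset t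
  hux : ∀ t ∈ Tset, ∀ x ∈ Icc (0:ℝ) 1, HasDerivWithinAt (fun y => u y t) (ux x t) (Icc 0 1) x
  hut : ∀ x ∈ Icc (0:ℝ) 1, ∀ t ∈ Tset, HasDerivWithinAt (fun s => u x s) (ut x t) Tset t
  huxx : ∀ t ∈ Tset, ∀ x ∈ Icc (0:ℝ) 1, HasDerivWithinAt (fun y => ux y t) (uxx x t) (Icc 0 1) x
  hθx : ∀ t ∈ Tset, ∀ x ∈ Icc (0:ℝ) 1, HasDerivWithinAt (fun y => θ y t) (θx x t) (Icc 0 1) x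
  hθt : ∀ x ∈ Icc (0:ℝ) 1, ∀ t ∈ Tset, HasDerivWithinAt (fun s => θ x s) (θt x t) Tset t
  hθxx : ∀ t ∈ Tset, ∀ x ∈ Icc (0:ℝ) 1, HasDerivWithinAt (fun y => θx y t) (θxx x t) (Icc 0 1) x
  /-- (i)  v_t = u_x -/
  eq_mass : ∀ x ∈ Icc (0:ℝ) 1, ∀ t ∈ Tset, vt x t = ux x t
  /-- (ii)  u_t = ((u_x − θ)/v)_x -/
  eq_mom : ∀ t ∈ Tset, ∀ x ∈ Icc (0:ℝ) 1,
    HasDerivWithinAt (fun y => (ux y t - θ y t) / v y t) (ut x t) (Icc 0 1) x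
  /-- (iii)  θ_t + (θ/v) u_x = ((θ^β θ_x)/v)_x + u_x²/v -/
  eq_energy : ∀ t ∈ Tset, ∀ x ∈ Icc (0:ℝ) 1, ∃ q : ℝ,
    HasDerivWithinAt (fun y => θ y t ^ β * θx y t / v y t) q (Icc 0 1) x ∧
    θt x t + θ x t / v x t * ux x t = q + (ux x t) ^ 2 / v x t
  bc_left : ∀ t ∈ Tset, (ux 0 t - θ 0 t) / v 0 t = -p t
  bc_right : ∀ t ∈ Tset, (ux 1 t - θ 1 t) / v 1 t = -p t
  bc_θ_left : ∀ t ∈ Tset, θx 0 t = 0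
  bc_θ_right : ∀ t ∈ Tset, θx 1 t = 0
  init_v : ∀ x ∈ Icc (0:ℝ) 1, v x 0 = v0 x
  init_u : ∀ x ∈ Icc (0:ℝ) 1, u x 0 = u0 x
  init_θ : ∀ x ∈ Icc (0:ℝ) 1, θ x 0 = θ0 x
  v0_pos : ∃ c > 0, ∀ x ∈ Icc (0:ℝ) 1, c ≤ v0 x
  θ0_pos : ∃ c > 0, ∀ x ∈ Icc (0:ℝ) 1, c ≤ θ0 x
  u0_mean : (∫ x in (0:ℝ)..1, u0 x) = 0

/-- FTC: derivative within `Icc a b`, continuous derivative. -/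
lemma ftc_aux {f f' : ℝ → ℝ} {a b : ℝ} (hab : a ≤ b)
    (hd : ∀ x ∈ Icc a b, HasDerivWithinAt f (f' x) (Icc a b) x)
    (hc : ContinuousOn f' (Icc a b)) : ∫ x in a..b, f' x = f b - f a := by
  apply intervalIntegral.integral_eq_sub_of_hasDeriv_right_of_le hab
  · exact fun x hx => (hd x hx).continuousWithinAt
  · intro x hx
    exact (hd x (Ioo_subset_Icc_self hx)).mono_of_mem_nhdsWithin
      (Icc_mem_nhdsGT_of_mem ⟨le_of_lt hx.1, hx.2⟩)
  · have : ContinuousOn f' (uIcc a b) := by rwa [uIcc_of_le hab]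
    exact this.intervalIntegrable

lemma primitive_hasDerivWithinAt {f : ℝ → ℝ} {T s : ℝ} (hs : s ∈ Icc (0:ℝ) T)
    (hf : ContinuousOn f (Icc 0 T)) :
    HasDerivWithinAt (fun t => ∫ x in (0:ℝ)..t, f x) (f s) (Icc 0 T) s := by
  haveI : Fact (s ∈ Icc (0:ℝ) T) := ⟨hs⟩
  apply intervalIntegral.integral_hasDerivWithinAt_right
  · have : ContinuousOn f (uIcc 0 s) := by
      rw [uIcc_of_le hs.1]; exact hf.mono (Icc_subset_Icc le_rfl hs.2)
    exact this.intervalIntegrable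
  · exact ⟨Icc 0 T, self_mem_nhdsWithin, hf.aestronglyMeasurable measurableSet_Icc⟩
  · exact hf.continuousWithinAt hs

/-- Continuity of a parametric integral over `[0,1]`. -/
lemma cont_param {F : ℝ → ℝ → ℝ} {T : ℝ}
    (hF : ContinuousOn (fun q : ℝ × ℝ => F q.1 q.2) (Icc 0 1 ×ˢ Icc 0 T)) :
    ContinuousOn (fun s => ∫ x in (0:ℝ)..1, F x s) (Icc 0 T) := by
  rcases le_or_gt T 0 with hT | hT
  · -- Icc 0 T is a subsingleton; continuity is trivial
    rcases lt_or_eq_of_le hT with h | h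
    · simp [Icc_eq_empty_of_lt h]
    · subst h
      intro s hs
      have : s = 0 := le_antisymm hs.2 hs.1
      subst this
      exact continuousWithinAt_singleton.mono (by simp [Icc_self])
  · have hrect : IsCompact (Icc (0:ℝ) 1 ×ˢ Icc (0:ℝ) T) :=
      isCompact_Icc.prod isCompact_Icc
    obtain ⟨C, hC⟩ : ∃ C, ∀ q ∈ Icc (0:ℝ) 1 ×ˢ Icc (0:ℝ) T, |F q.1 q.2| ≤ C := by
      rcases hrect.exists_bound_of_continuousOn hF with ⟨C, hC⟩
      exact ⟨C, fun q hq => by simpa using hC q hq⟩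
    have h01 : (0:ℝ) ≤ 1 := by norm_num
    have key : ContinuousOn (fun s => ∫ x in Ioc (0:ℝ) 1, F x s) (Icc 0 T) := by
      apply continuousOn_of_dominated (bound := fun _ => C)
      · intro s hs
        apply ContinuousOn.aestronglyMeasurable _ measurableSet_Ioc
        intro x hx
        exact (hF.comp ((continuous_id.prodMk continuous_const).continuousOn) (fun y hy => ⟨Ioc_subset_Icc_self hy, hs⟩)).continuousWithinAt hx
      · intro s hs
        refine (ae_restrict_iff' measurableSet_Ioc).2 (ae_of_all _ fun x hx => ?_)
        exact hC (x, s) ⟨Ioc_subset_Icc_self hx, hs⟩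
      · simp [integrable_const]
      · refine (ae_restrict_iff' measurableSet_Ioc).2 (ae_of_all _ fun x hx => ?_)
        intro s hs
        exact (hF.comp ((continuous_const.prodMk continuous_id).continuousOn) (fun y hy => ⟨Ioc_subset_Icc_self hx, hy⟩)).continuousWithinAt hs
    intro s hs
    have := key s hs
    refine ContinuousWithinAt.congr this (fun t ht => ?_) ?_ <;>
      simp [intervalIntegral.integral_of_le h01]

lemma swap_aux {G : ℝ → ℝ → ℝ} {t : ℝ} (ht : 0 ≤ t)
    (hG : ContinuousOn (fun q : ℝ × ℝ => G q.1 q.2) (Icc 0 1 ×ˢ Icc 0 t)) :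
    ∫ x in (0:ℝ)..1, ∫ s in (0:ℝ)..t, G x s = ∫ s in (0:ℝ)..t, ∫ x in (0:ℝ)..1, G x s := by
  have h01 : (0:ℝ) ≤ 1 := by norm_num
  have hint : Integrable (Function.uncurry G)
      ((volume.restrict (Ioc (0:ℝ) 1)).prod (volume.restrict (Ioc (0:ℝ) t))) := by
    rw [Measure.prod_restrict]
    have hc : IntegrableOn (Function.uncurry G) (Icc (0:ℝ) 1 ×ˢ Icc (0:ℝ) t)
        (volume.prod volume) := by
      have h2 : IntegrableOn (Function.uncurry G) (Icc (0:ℝ) 1 ×ˢ Icc (0:ℝ) t) volume :=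
        hG.integrableOn_compact (isCompact_Icc.prod isCompact_Icc)
      rwa [Measure.volume_eq_prod] at h2
    exact hc.mono_set (prod_mono Ioc_subset_Icc_self Ioc_subset_Icc_self)
  have := MeasureTheory.integral_integral_swap hint
  simp only [intervalIntegral.integral_of_le h01, intervalIntegral.integral_of_le ht]
  exact this

section Master

variable {β T : ℝ} {p p' v0 u0 θ0 : ℝ → ℝ}
  {v u θ vx vt ux ut uxx θx θt θxx : ℝ → ℝ → ℝ}

/-- slice continuity in x -/
lemma sliceX {f : ℝ → ℝ → ℝ} {T : ℝ}
    (hf : ContinuousOn (fun q : ℝ × ℝ => f q.1 q.2) (Icc 0 1 ×ˢ Icc 0 T))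
    {s : ℝ} (hs : s ∈ Icc (0:ℝ) T) : ContinuousOn (fun x => f x s) (Icc 0 1) :=
  hf.comp ((continuous_id.prodMk continuous_const).continuousOn) (fun _ hy => ⟨hy, hs⟩)

/-- slice continuity in t -/
lemma sliceT {f : ℝ → ℝ → ℝ} {T : ℝ}
    (hf : ContinuousOn (fun q : ℝ × ℝ => f q.1 q.2) (Icc 0 1 ×ˢ Icc 0 T))
    {x : ℝ} (hx : x ∈ Icc (0:ℝ) 1) : ContinuousOn (fun s => f x s) (Icc 0 T) :=
  hf.comp ((continuous_const.prodMk continuous_id).continuousOn) (fun _ hy => ⟨hx, hy⟩)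

theorem master (hT : 0 < T)
    (hP : PressureC1 p p')
    (sol : OPSol β (Icc 0 T) p v0 u0 θ0 v u θ vx vt ux ut uxx θx θt θxx)
    {t : ℝ} (ht : t ∈ Icc (0:ℝ) T) :
    (∫ x in (0:ℝ)..1, (u x t ^ 2 / 2 + (θ x t - Real.log (θ x t))
        + (p t * v x t - Real.log (v x t))))
      + (∫ s in (0:ℝ)..t, ∫ x in (0:ℝ)..1,
          (θ x s ^ β * θx x s ^ 2 / (v x s * θ x s ^ 2) + ux x s ^ 2 / (v x s * θ x s)))
    = (∫ x in (0:ℝ)..1, (u x 0 ^ 2 / 2 + (θ x 0 - Real.log (θ x 0))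
        + (p 0 * v x 0 - Real.log (v x 0))))
      + ∫ s in (0:ℝ)..t, p' s * ∫ x in (0:ℝ)..1, v x s := by
  obtain ⟨hpd, hp'c, hppos⟩ := hP
  have hsubI : Icc (0:ℝ) T ⊆ Ici 0 := fun s hs => hs.1
  have hIccT : Icc (0:ℝ) t ⊆ Icc 0 T := Icc_subset_Icc le_rfl ht.2
  have hpc : ContinuousOn p (Ici 0) := fun s hs => (hpd s hs).continuousWithinAt
  have h01 : (0:ℝ) ≤ 1 := zero_le_one
  -- positivity on rectangle
  have hvne : ∀ q ∈ Icc (0:ℝ) 1 ×ˢ Icc (0:ℝ) T, v q.1 q.2 ≠ 0 :=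
    fun q hq => (sol.v_pos q.1 hq.1 q.2 hq.2).ne'
  have hθne : ∀ q ∈ Icc (0:ℝ) 1 ×ˢ Icc (0:ℝ) T, θ q.1 q.2 ≠ 0 :=
    fun q hq => (sol.θ_pos q.1 hq.1 q.2 hq.2).ne'
  -- 2D continuity of p, p' composed with snd
  have cpt : ContinuousOn (fun q : ℝ × ℝ => p q.2) (Icc 0 1 ×ˢ Icc 0 T) :=
    hpc.comp (continuous_snd.continuousOn) (fun q hq => hq.2.1)
  have cpt' : ContinuousOn (fun q : ℝ × ℝ => p' q.2) (Icc 0 1 ×ˢ Icc 0 T) :=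
    hp'c.comp (continuous_snd.continuousOn) (fun q hq => hq.2.1)
  -- 2D continuity of G
  have cG : ContinuousOn (fun q : ℝ × ℝ =>
      u q.1 q.2 * ut q.1 q.2 + (θt q.1 q.2 - θt q.1 q.2 / θ q.1 q.2)
        + (p' q.2 * v q.1 q.2 + p q.2 * vt q.1 q.2 - vt q.1 q.2 / v q.1 q.2))
      (Icc 0 1 ×ˢ Icc 0 T) := by
    exact ((sol.cont_u.mul sol.cont_ut).add
      (sol.cont_θt.sub (sol.cont_θt.div sol.cont_θ hθne))).add
      (((cpt'.mul sol.cont_v).add (cpt.mul sol.cont_vt)).sub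
        (sol.cont_vt.div sol.cont_v hvne))
  -- 2D continuity of the dissipation integrand
  have cVd : ContinuousOn (fun q : ℝ × ℝ =>
      θ q.1 q.2 ^ β * θx q.1 q.2 ^ 2 / (v q.1 q.2 * θ q.1 q.2 ^ 2)
        + ux q.1 q.2 ^ 2 / (v q.1 q.2 * θ q.1 q.2)) (Icc 0 1 ×ˢ Icc 0 T) := by
    have hβc : ContinuousOn (fun q : ℝ × ℝ => θ q.1 q.2 ^ β) (Icc 0 1 ×ˢ Icc 0 T) :=
      sol.cont_θ.rpow_const (fun q hq => Or.inl (hθne q hq))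
    exact ((hβc.mul (sol.cont_θx.pow 2)).div (sol.cont_v.mul (sol.cont_θ.pow 2))
        (fun q hq => mul_ne_zero (hvne q hq) (pow_ne_zero 2 (hθne q hq)))).add
      ((sol.cont_ux.pow 2).div (sol.cont_v.mul sol.cont_θ)
        (fun q hq => mul_ne_zero (hvne q hq) (hθne q hq)))
  -- time derivative of the energy density
  have hder : ∀ x ∈ Icc (0:ℝ) 1, ∀ s ∈ Icc (0:ℝ) T,
      HasDerivWithinAt (fun s' => u x s' ^ 2 / 2 + (θ x s' - Real.log (θ x s'))
          + (p s' * v x s' - Real.log (v x s')))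
        (u x s * ut x s + (θt x s - θt x s / θ x s)
          + (p' s * v x s + p s * vt x s - vt x s / v x s)) (Icc 0 T) s := by
    intro x hx s hs
    have hvp := sol.v_pos x hx s hs
    have hθp := sol.θ_pos x hx s hs
    have h1 := ((sol.hut x hx s hs).fun_pow 2).div_const 2
    have h2 := (sol.hθt x hx s hs).fun_sub ((sol.hθt x hx s hs).log hθp.ne')
    have hp0 : HasDerivWithinAt p (p' s) (Icc 0 T) s := (hpd s (hsubI hs)).mono hsubI
    have h3 := (hp0.fun_mul (sol.hvt x hx s hs)).fun_sub ((sol.hvt x hx s hs).log hvp.ne')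
    have h4 := (h1.fun_add h2).fun_add h3
    refine h4.congr_deriv ?_
    push_cast
    ring
  -- time FTC for each x
  have step1 : ∀ x ∈ Icc (0:ℝ) 1,
      (∫ s in (0:ℝ)..t, (u x s * ut x s + (θt x s - θt x s / θ x s)
          + (p' s * v x s + p s * vt x s - vt x s / v x s)))
        = (u x t ^ 2 / 2 + (θ x t - Real.log (θ x t)) + (p t * v x t - Real.log (v x t)))
          - (u x 0 ^ 2 / 2 + (θ x 0 - Real.log (θ x 0)) + (p 0 * v x 0 - Real.log (v x 0))) := by
    intro x hx
    exact ftc_aux ht.1 (fun s hs => (hder x hx s (hIccT hs)).mono hIccT)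
      (((cG.comp ((continuous_const.prodMk continuous_id).continuousOn)
        (fun _ hy => ⟨hx, hy⟩)).mono hIccT))
  -- continuity of the energy density slices
  have hgc : ∀ τ ∈ Icc (0:ℝ) T, ContinuousOn
      (fun x => u x τ ^ 2 / 2 + (θ x τ - Real.log (θ x τ))
        + (p τ * v x τ - Real.log (v x τ))) (Icc 0 1) := by
    intro τ hτ
    have hvneτ : ∀ x ∈ Icc (0:ℝ) 1, v x τ ≠ 0 := fun x hx => hvne (x, τ) ⟨hx, hτ⟩
    have hθneτ : ∀ x ∈ Icc (0:ℝ) 1, θ x τ ≠ 0 := fun x hx => hθne (x, τ) ⟨hx, hτ⟩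
    exact ((((sliceX sol.cont_u hτ).pow 2).div_const 2).add
      ((sliceX sol.cont_θ hτ).sub ((sliceX sol.cont_θ hτ).log hθneτ))).add
      ((continuousOn_const.mul (sliceX sol.cont_v hτ)).sub
        ((sliceX sol.cont_v hτ).log hvneτ))
  have hgint : ∀ τ ∈ Icc (0:ℝ) T, IntervalIntegrable
      (fun x => u x τ ^ 2 / 2 + (θ x τ - Real.log (θ x τ))
        + (p τ * v x τ - Real.log (v x τ))) volume 0 1 := by
    intro τ hτ
    have := hgc τ hτ
    rw [← uIcc_of_le h01] at this
    exact this.intervalIntegrable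
  -- integrate step1 in x and use Fubini
  have step2 : (∫ x in (0:ℝ)..1, (u x t ^ 2 / 2 + (θ x t - Real.log (θ x t))
        + (p t * v x t - Real.log (v x t))))
      - (∫ x in (0:ℝ)..1, (u x 0 ^ 2 / 2 + (θ x 0 - Real.log (θ x 0))
        + (p 0 * v x 0 - Real.log (v x 0))))
      = ∫ s in (0:ℝ)..t, ∫ x in (0:ℝ)..1,
          (u x s * ut x s + (θt x s - θt x s / θ x s)
            + (p' s * v x s + p s * vt x s - vt x s / v x s)) := by
    rw [← intervalIntegral.integral_sub (hgint t ht) (hgint 0 (left_mem_Icc.2 hT.le))]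
    rw [← swap_aux ht.1 (cG.mono (prod_mono subset_rfl hIccT))]
    apply intervalIntegral.integral_congr
    intro x hx
    rw [uIcc_of_le h01] at hx
    exact (step1 x hx).symm

  -- spatial identity at each time s
  have step4 : ∀ s ∈ Icc (0:ℝ) T,
      (∫ x in (0:ℝ)..1, (u x s * ut x s + (θt x s - θt x s / θ x s)
          + (p' s * v x s + p s * vt x s - vt x s / v x s)))
        = p' s * (∫ x in (0:ℝ)..1, v x s)
          - ∫ x in (0:ℝ)..1, (θ x s ^ β * θx x s ^ 2 / (v x s * θ x s ^ 2)
              + ux x s ^ 2 / (v x s * θ x s)) := by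
    intro s hs
    have hvp : ∀ x ∈ Icc (0:ℝ) 1, 0 < v x s := fun x hx => sol.v_pos x hx s hs
    have hθp : ∀ x ∈ Icc (0:ℝ) 1, 0 < θ x s := fun x hx => sol.θ_pos x hx s hs
    have hvn : ∀ x ∈ Icc (0:ℝ) 1, v x s ≠ 0 := fun x hx => (hvp x hx).ne'
    have hθn : ∀ x ∈ Icc (0:ℝ) 1, θ x s ≠ 0 := fun x hx => (hθp x hx).ne'
    have h0m : (0:ℝ) ∈ Icc (0:ℝ) 1 := left_mem_Icc.2 h01
    have h1m : (1:ℝ) ∈ Icc (0:ℝ) 1 := right_mem_Icc.2 h01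
    -- slice continuity in x
    have cu := sliceX sol.cont_u hs
    have cux := sliceX sol.cont_ux hs
    have cut := sliceX sol.cont_ut hs
    have cθ := sliceX sol.cont_θ hs
    have cθx := sliceX sol.cont_θx hs
    have cθt := sliceX sol.cont_θt hs
    have cv := sliceX sol.cont_v hs
    have cvt := sliceX sol.cont_vt hs
    have cβ : ContinuousOn (fun x => θ x s ^ β) (Icc 0 1) :=
      cθ.rpow_const (fun x hx => Or.inl (hθn x hx))
    -- the heat flux Q and its derivative r
    have hQd : ∀ x ∈ Icc (0:ℝ) 1, HasDerivWithinAt (fun y => θ y s ^ β * θx y s / v y s)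
        (θt x s + θ x s * ux x s / v x s - ux x s ^ 2 / v x s) (Icc 0 1) x := by
      intro x hx
      obtain ⟨q, hq, heq⟩ := sol.eq_energy s hs x hx
      have hqe : θt x s + θ x s * ux x s / v x s - ux x s ^ 2 / v x s = q := by
        have hr : θ x s / v x s * ux x s = θ x s * ux x s / v x s := by ring
        linarith [heq, hr]
      exact hqe ▸ hq
    have cr : ContinuousOn (fun x => θt x s + θ x s * ux x s / v x s - ux x s ^ 2 / v x s)
        (Icc 0 1) :=
      (cθt.add ((cθ.mul cux).div cv hvn)).sub ((cux.pow 2).div cv hvn)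
    have cQ : ContinuousOn (fun x => θ x s ^ β * θx x s / v x s) (Icc 0 1) :=
      (cβ.mul cθx).div cv hvn
    -- ∫ r = 0
    have int_r : (∫ x in (0:ℝ)..1,
        (θt x s + θ x s * ux x s / v x s - ux x s ^ 2 / v x s)) = 0 := by
      rw [ftc_aux h01 hQd cr]
      simp [sol.bc_θ_left s hs, sol.bc_θ_right s hs]
    -- ∫ (Q/θ)' = 0
    have hQθd : ∀ x ∈ Icc (0:ℝ) 1, HasDerivWithinAt (fun y => (θ y s ^ β * θx y s / v y s) / θ y s)
        (((θt x s + θ x s * ux x s / v x s - ux x s ^ 2 / v x s) * θ x s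
            - (θ x s ^ β * θx x s / v x s) * θx x s) / θ x s ^ 2) (Icc 0 1) x :=
      fun x hx => (hQd x hx).div (sol.hθx s hs x hx) (hθn x hx)
    have cD4 : ContinuousOn (fun x =>
        ((θt x s + θ x s * ux x s / v x s - ux x s ^ 2 / v x s) * θ x s
            - (θ x s ^ β * θx x s / v x s) * θx x s) / θ x s ^ 2) (Icc 0 1) :=
      ((cr.mul cθ).sub (cQ.mul cθx)).div (cθ.pow 2) (fun x hx => pow_ne_zero 2 (hθn x hx))
    have int_4 : (∫ x in (0:ℝ)..1,
        ((θt x s + θ x s * ux x s / v x s - ux x s ^ 2 / v x s) * θ x s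
            - (θ x s ^ β * θx x s / v x s) * θx x s) / θ x s ^ 2) = 0 := by
      rw [ftc_aux h01 hQθd cD4]
      simp [sol.bc_θ_left s hs, sol.bc_θ_right s hs]
    -- ∫ (u σ)' : momentum part
    have huσ : ∀ x ∈ Icc (0:ℝ) 1, HasDerivWithinAt
        (fun y => u y s * ((ux y s - θ y s) / v y s))
        (ux x s * ((ux x s - θ x s) / v x s) + u x s * ut x s) (Icc 0 1) x :=
      fun x hx => (sol.hux s hs x hx).mul (sol.eq_mom s hs x hx)
    have cT1 : ContinuousOn (fun x => ux x s * ((ux x s - θ x s) / v x s)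
        + u x s * ut x s) (Icc 0 1) :=
      (cux.mul ((cux.sub cθ).div cv hvn)).add (cu.mul cut)
    have int_2 : (∫ x in (0:ℝ)..1, (ux x s * ((ux x s - θ x s) / v x s) + u x s * ut x s))
        = - p s * u 1 s + p s * u 0 s := by
      rw [ftc_aux h01 huσ cT1, sol.bc_right s hs, sol.bc_left s hs]
      ring
    -- ∫ ux = u(1) - u(0)
    have int_1 : (∫ x in (0:ℝ)..1, ux x s) = u 1 s - u 0 s :=
      ftc_aux h01 (fun x hx => sol.hux s hs x hx) cux
    -- pointwise algebraic identity for the integrand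
    have hEq : EqOn (fun x => u x s * ut x s + (θt x s - θt x s / θ x s)
          + (p' s * v x s + p s * vt x s - vt x s / v x s))
        (fun x => (ux x s * ((ux x s - θ x s) / v x s) + u x s * ut x s)
          + ((θt x s + θ x s * ux x s / v x s - ux x s ^ 2 / v x s)
            - ((θt x s + θ x s * ux x s / v x s - ux x s ^ 2 / v x s) * θ x s
                - (θ x s ^ β * θx x s / v x s) * θx x s) / θ x s ^ 2)
          + (p' s * v x s + p s * ux x s)
          - (θ x s ^ β * θx x s ^ 2 / (v x s * θ x s ^ 2)
              + ux x s ^ 2 / (v x s * θ x s))) (Icc 0 1) := by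
      intro x hx
      simp only
      rw [sol.eq_mass x hx s hs]
      have h1 := hvn x hx
      have h2 := hθn x hx
      field_simp
      ring
    -- integrability of the pieces
    have mkII : ∀ {f : ℝ → ℝ}, ContinuousOn f (Icc 0 1) → IntervalIntegrable f volume 0 1 := by
      intro f hf
      rw [← uIcc_of_le h01] at hf
      exact hf.intervalIntegrable
    have iT1 := mkII cT1
    have iT2 : IntervalIntegrable (fun x =>
        (θt x s + θ x s * ux x s / v x s - ux x s ^ 2 / v x s)
          - ((θt x s + θ x s * ux x s / v x s - ux x s ^ 2 / v x s) * θ x s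
              - (θ x s ^ β * θx x s / v x s) * θx x s) / θ x s ^ 2) volume 0 1 :=
      mkII (cr.sub cD4)
    have iT4 : IntervalIntegrable (fun x => p' s * v x s + p s * ux x s) volume 0 1 :=
      mkII ((continuousOn_const.mul cv).add (continuousOn_const.mul cux))
    have iT5 : IntervalIntegrable (fun x =>
        θ x s ^ β * θx x s ^ 2 / (v x s * θ x s ^ 2) + ux x s ^ 2 / (v x s * θ x s))
        volume 0 1 :=
      mkII (((cβ.mul (cθx.pow 2)).div (cv.mul (cθ.pow 2))
          (fun x hx => mul_ne_zero (hvn x hx) (pow_ne_zero 2 (hθn x hx)))).add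
        ((cux.pow 2).div (cv.mul cθ) (fun x hx => mul_ne_zero (hvn x hx) (hθn x hx))))
    calc (∫ x in (0:ℝ)..1, (u x s * ut x s + (θt x s - θt x s / θ x s)
          + (p' s * v x s + p s * vt x s - vt x s / v x s)))
        = ∫ x in (0:ℝ)..1, ((ux x s * ((ux x s - θ x s) / v x s) + u x s * ut x s)
            + ((θt x s + θ x s * ux x s / v x s - ux x s ^ 2 / v x s)
              - ((θt x s + θ x s * ux x s / v x s - ux x s ^ 2 / v x s) * θ x s
                  - (θ x s ^ β * θx x s / v x s) * θx x s) / θ x s ^ 2)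
            + (p' s * v x s + p s * ux x s)
            - (θ x s ^ β * θx x s ^ 2 / (v x s * θ x s ^ 2)
                + ux x s ^ 2 / (v x s * θ x s))) := by
          apply intervalIntegral.integral_congr
          intro x hx
          rw [uIcc_of_le h01] at hx
          exact hEq hx
      _ = (∫ x in (0:ℝ)..1, (ux x s * ((ux x s - θ x s) / v x s) + u x s * ut x s))
            + (∫ x in (0:ℝ)..1, ((θt x s + θ x s * ux x s / v x s - ux x s ^ 2 / v x s)
              - ((θt x s + θ x s * ux x s / v x s - ux x s ^ 2 / v x s) * θ x s
                  - (θ x s ^ β * θx x s / v x s) * θx x s) / θ x s ^ 2))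
            + (∫ x in (0:ℝ)..1, (p' s * v x s + p s * ux x s))
            - ∫ x in (0:ℝ)..1, (θ x s ^ β * θx x s ^ 2 / (v x s * θ x s ^ 2)
                + ux x s ^ 2 / (v x s * θ x s)) := by
          rw [intervalIntegral.integral_sub ((iT1.add iT2).add iT4) iT5,
            intervalIntegral.integral_add (iT1.add iT2) iT4,
            intervalIntegral.integral_add iT1 iT2]
      _ = p' s * (∫ x in (0:ℝ)..1, v x s)
            - ∫ x in (0:ℝ)..1, (θ x s ^ β * θx x s ^ 2 / (v x s * θ x s ^ 2)
                + ux x s ^ 2 / (v x s * θ x s)) := by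
          rw [intervalIntegral.integral_sub (mkII cr) (mkII cD4), int_r, int_4, int_2,
            intervalIntegral.integral_add (f := fun x => p' s * v x s) (g := fun x => p s * ux x s) (mkII (continuousOn_const.mul cv))
              (mkII (continuousOn_const.mul cux)),
            intervalIntegral.integral_const_mul, intervalIntegral.integral_const_mul, int_1]
          ring
  -- put everything together
  have cW : ContinuousOn (fun s => ∫ x in (0:ℝ)..1, v x s) (Icc 0 T) := cont_param sol.cont_v
  have cV : ContinuousOn (fun s => ∫ x in (0:ℝ)..1,
      (θ x s ^ β * θx x s ^ 2 / (v x s * θ x s ^ 2) + ux x s ^ 2 / (v x s * θ x s)))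
      (Icc 0 T) := cont_param cVd
  have ipW : IntervalIntegrable (fun s => p' s * ∫ x in (0:ℝ)..1, v x s) volume 0 t := by
    have : ContinuousOn (fun s => p' s * ∫ x in (0:ℝ)..1, v x s) (uIcc 0 t) := by
      rw [uIcc_of_le ht.1]
      exact ((hp'c.mono hsubI).mono hIccT).mul (cW.mono hIccT)
    exact this.intervalIntegrable
  have iV : IntervalIntegrable (fun s => ∫ x in (0:ℝ)..1,
      (θ x s ^ β * θx x s ^ 2 / (v x s * θ x s ^ 2) + ux x s ^ 2 / (v x s * θ x s)))
      volume 0 t := by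
    have : ContinuousOn (fun s => ∫ x in (0:ℝ)..1,
        (θ x s ^ β * θx x s ^ 2 / (v x s * θ x s ^ 2) + ux x s ^ 2 / (v x s * θ x s)))
        (uIcc 0 t) := by
      rw [uIcc_of_le ht.1]
      exact cV.mono hIccT
    exact this.intervalIntegrable
  have step5 : (∫ s in (0:ℝ)..t, ∫ x in (0:ℝ)..1,
      (u x s * ut x s + (θt x s - θt x s / θ x s)
        + (p' s * v x s + p s * vt x s - vt x s / v x s)))
      = (∫ s in (0:ℝ)..t, p' s * ∫ x in (0:ℝ)..1, v x s)
        - ∫ s in (0:ℝ)..t, ∫ x in (0:ℝ)..1,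
            (θ x s ^ β * θx x s ^ 2 / (v x s * θ x s ^ 2) + ux x s ^ 2 / (v x s * θ x s)) := by
    rw [← intervalIntegral.integral_sub ipW iV]
    apply intervalIntegral.integral_congr
    intro s hs
    rw [uIcc_of_le ht.1] at hs
    exact step4 s (hIccT hs)
  rw [step5] at step2
  linarith [step2]



end Master

/-- Abstract Grönwall-type estimate via the exponential trick. -/
lemma gronwall_aux {W q : ℝ → ℝ} {T c₁ B Iv : ℝ} (hT : 0 < T) (hc : 0 < c₁) (hB : 0 < B)
    (hWc : ContinuousOn W (Icc 0 T)) (hqc : ContinuousOn q (Icc 0 T))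
    (hqnn : ∀ s ∈ Icc (0:ℝ) T, 0 ≤ q s)
    (hW : ∀ s ∈ Icc (0:ℝ) T, W s ≤ B + c₁ * ∫ σ in (0:ℝ)..s, q σ * W σ)
    (hqI : (∫ s in (0:ℝ)..T, q s) ≤ Iv) :
    ∀ t ∈ Icc (0:ℝ) T, (∫ s in (0:ℝ)..t, q s * W s) ≤ B / c₁ * Real.exp (c₁ * Iv) := by
  intro t ht
  set J : ℝ → ℝ := fun τ => ∫ s in (0:ℝ)..τ, q s * W s with hJdef
  set H : ℝ → ℝ := fun τ => ∫ s in (0:ℝ)..τ, q s with hHdef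
  have hJd : ∀ s ∈ Icc (0:ℝ) T, HasDerivWithinAt J (q s * W s) (Icc 0 T) s :=
    fun s hs => primitive_hasDerivWithinAt hs (hqc.mul hWc)
  have hHd : ∀ s ∈ Icc (0:ℝ) T, HasDerivWithinAt H (q s) (Icc 0 T) s :=
    fun s hs => primitive_hasDerivWithinAt hs hqc
  set φ : ℝ → ℝ := fun s => (B / c₁ + J s) * Real.exp (-(c₁ * H s)) with hφdef
  have hφd : ∀ s ∈ Icc (0:ℝ) T, HasDerivWithinAt φ
      ((0 + q s * W s) * Real.exp (-(c₁ * H s))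
        + (B / c₁ + J s) * (Real.exp (-(c₁ * H s)) * (-(c₁ * q s)))) (Icc 0 T) s :=
    fun s hs => ((hasDerivWithinAt_const s (Icc 0 T) (B / c₁)).add (hJd s hs)).mul
      ((((hHd s hs).const_mul c₁).neg).exp)
  have hφc : ContinuousOn φ (Icc 0 T) := fun s hs => (hφd s hs).continuousWithinAt
  have hanti : AntitoneOn φ (Icc 0 T) := by
    apply antitoneOn_of_deriv_nonpos (convex_Icc 0 T) hφc
    · intro s hs
      rw [interior_Icc] at hs
      exact ((hφd s (Ioo_subset_Icc_self hs)).hasDerivAt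
        (Icc_mem_nhds hs.1 hs.2)).differentiableAt.differentiableWithinAt
    · intro s hs
      rw [interior_Icc] at hs
      have hds := (hφd s (Ioo_subset_Icc_self hs)).hasDerivAt (Icc_mem_nhds hs.1 hs.2)
      rw [hds.deriv]
      have hWs := hW s (Ioo_subset_Icc_self hs)
      have hqs := hqnn s (Ioo_subset_Icc_self hs)
      have he : 0 < Real.exp (-(c₁ * H s)) := Real.exp_pos _
      have hcB : c₁ * (B / c₁) = B := by field_simp
      nlinarith [mul_nonneg hqs he.le, mul_le_mul_of_nonneg_left hWs hqs,
        mul_pos hc he, mul_nonneg (mul_nonneg hqs he.le) (sub_nonneg.2 hWs)]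
  have hJ0 : J 0 = 0 := intervalIntegral.integral_same
  have hH0 : H 0 = 0 := intervalIntegral.integral_same
  have hφ0 : φ 0 = B / c₁ := by
    rw [hφdef]; simp [hJ0, hH0]
  have hφt : φ t ≤ B / c₁ := by
    rw [← hφ0]
    exact hanti (left_mem_Icc.2 hT.le) ht ht.1
  -- H t ≤ Iv
  have hHI : H t ≤ Iv := by
    have i1 : IntervalIntegrable q volume 0 t := by
      have : ContinuousOn q (uIcc 0 t) := by
        rw [uIcc_of_le ht.1]; exact hqc.mono (Icc_subset_Icc le_rfl ht.2)
      exact this.intervalIntegrable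
    have i2 : IntervalIntegrable q volume t T := by
      have : ContinuousOn q (uIcc t T) := by
        rw [uIcc_of_le ht.2]; exact hqc.mono (Icc_subset_Icc ht.1 le_rfl)
      exact this.intervalIntegrable
    have hsplit := intervalIntegral.integral_add_adjacent_intervals i1 i2
    have h2 : 0 ≤ ∫ s in t..T, q s :=
      intervalIntegral.integral_nonneg ht.2 (fun s hs => hqnn s ⟨ht.1.trans hs.1, hs.2⟩)
    linarith [hqI]
  -- convert φ t ≤ B/c₁ into the desired bound
  have he : (0:ℝ) < Real.exp (c₁ * H t) := Real.exp_pos _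
  have hmul : (B / c₁ + J t) ≤ B / c₁ * Real.exp (c₁ * H t) := by
    have := mul_le_mul_of_nonneg_right hφt he.le
    rwa [mul_assoc, ← Real.exp_add, neg_add_cancel, Real.exp_zero, mul_one] at this
  have hexp : Real.exp (c₁ * H t) ≤ Real.exp (c₁ * Iv) :=
    Real.exp_le_exp.2 (mul_le_mul_of_nonneg_left hHI hc.le)
  have hBc : 0 < B / c₁ := div_pos hB hc
  have : B / c₁ * Real.exp (c₁ * H t) ≤ B / c₁ * Real.exp (c₁ * Iv) :=
    mul_le_mul_of_nonneg_left hexp hBc.le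
  have hJnn : 0 ≤ B / c₁ := hBc.le
  linarith

lemma one_le_sub_log {w : ℝ} (hw : 0 < w) : (1:ℝ) ≤ w - Real.log w := by
  nlinarith [Real.log_le_sub_one_of_pos hw]

lemma half_lin_le {c w : ℝ} (hc : 0 < c) (hw : 0 < w) :
    c / 2 * w + (1 + Real.log (c / 2)) ≤ c * w - Real.log w := by
  have h := Real.log_le_sub_one_of_pos (mul_pos (half_pos hc) hw)
  rw [Real.log_mul (by positivity) hw.ne'] at h
  linarith

lemma H1_L2 {f f' : ℝ → ℝ} {E : ℝ} (hc : ContinuousOn f (Icc 0 1))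
    (hc' : ContinuousOn f' (Icc 0 1)) (hE : H1norm f f' ≤ E) :
    (∫ x in (0:ℝ)..1, f x ^ 2) ≤ E ^ 2 := by
  have h01 : (0:ℝ) ≤ 1 := zero_le_one
  have hS : 0 ≤ ∫ x in (0:ℝ)..1, (f x ^ 2 + f' x ^ 2) :=
    intervalIntegral.integral_nonneg h01 (fun x _ => by positivity)
  have hsq : (∫ x in (0:ℝ)..1, (f x ^ 2 + f' x ^ 2)) ≤ E ^ 2 := by
    have h1 : H1norm f f' ^ 2 = ∫ x in (0:ℝ)..1, (f x ^ 2 + f' x ^ 2) := Real.sq_sqrt hS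
    calc (∫ x in (0:ℝ)..1, (f x ^ 2 + f' x ^ 2)) = H1norm f f' ^ 2 := h1.symm
      _ ≤ E ^ 2 := by
          have := Real.sqrt_nonneg (∫ x in (0:ℝ)..1, (f x ^ 2 + f' x ^ 2))
          have h2 : 0 ≤ H1norm f f' := this
          nlinarith [hE]
  have i1 : IntervalIntegrable (fun x => f x ^ 2) volume 0 1 := by
    have : ContinuousOn (fun x => f x ^ 2) (uIcc 0 1) := by
      rw [uIcc_of_le h01]; exact hc.pow 2
    exact this.intervalIntegrable
  have i2 : IntervalIntegrable (fun x => f' x ^ 2) volume 0 1 := by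
    have : ContinuousOn (fun x => f' x ^ 2) (uIcc 0 1) := by
      rw [uIcc_of_le h01]; exact hc'.pow 2
    exact this.intervalIntegrable
  have hsplit : (∫ x in (0:ℝ)..1, (f x ^ 2 + f' x ^ 2))
      = (∫ x in (0:ℝ)..1, f x ^ 2) + ∫ x in (0:ℝ)..1, f' x ^ 2 :=
    intervalIntegral.integral_add i1 i2
  have h2 : 0 ≤ ∫ x in (0:ℝ)..1, f' x ^ 2 :=
    intervalIntegral.integral_nonneg h01 (fun x _ => sq_nonneg _)
  linarith

/-- basic energy estimate. -/
theorem basic_energy_estimate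
    (β E δ m M I : ℝ) (hβ : 0 < β) (hE : 0 < E) (hδ : 0 < δ)
    (hm : 0 < m) (hM : 0 < M) (hI : 0 < I) :
    ∃ C₀ > 0, ∀ T > 0, ∀ p p' v0 u0 θ0 : ℝ → ℝ,
      ∀ v u θ vx vt ux ut uxx θx θt θxx : ℝ → ℝ → ℝ,
      PressureC1 p p' →
      (∀ t ∈ Icc (0:ℝ) T, m ≤ p t ∧ p t ≤ M) →
      (∫ t in (0:ℝ)..T, |p' t|) ≤ I →
      OPSol β (Icc 0 T) p v0 u0 θ0 v u θ vx vt ux ut uxx θx θt θxx →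
      EdeltaBounded E δ v0 u0 θ0 vx ux θx →
      ∀ t ∈ Icc (0:ℝ) T,
        (∫ x in (0:ℝ)..1,
            ((u x t) ^ 2 / 2 + (v x t - Real.log (v x t)) + (θ x t - Real.log (θ x t)))) +
          (∫ s in (0:ℝ)..T, ∫ x in (0:ℝ)..1,
            (θ x s ^ β * (θx x s) ^ 2 / (v x s * (θ x s) ^ 2) +
              (ux x s) ^ 2 / (v x s * θ x s))) ≤ C₀ := by
  set c₁ : ℝ := 2 / m with hc₁def
  set K : ℝ := |2 + Real.log (m / 2)| with hKdef
  set A₀ : ℝ := E ^ 2 / 2 + (1 + E ^ 2) / 2 + M * (1 + E ^ 2) / 2 + 2 * |Real.log δ| + 1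
    with hA₀def
  set B : ℝ := c₁ * A₀ + c₁ * K + 1 with hBdef
  set Jm : ℝ := B / c₁ * Real.exp (c₁ * I) with hJmdef
  have hc₁ : 0 < c₁ := div_pos two_pos hm
  have hK : 0 ≤ K := abs_nonneg _
  have hA₀ : 0 < A₀ := by
    have h1 : 0 ≤ M * (1 + E ^ 2) / 2 := by positivity
    have h2 : 0 ≤ |Real.log δ| := abs_nonneg _
    rw [hA₀def]; positivity
  have hB : 0 < B := by
    have h1 : 0 < c₁ * A₀ := mul_pos hc₁ hA₀
    have h2 : 0 ≤ c₁ * K := mul_nonneg hc₁.le hK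
    rw [hBdef]; linarith
  have hJm : 0 < Jm := by
    rw [hJmdef]; exact mul_pos (div_pos hB hc₁) (Real.exp_pos _)
  clear_value c₁ K A₀ B Jm
  refine ⟨2 * A₀ + (2 + c₁) * Jm + B + K + 1, by nlinarith, ?_⟩
  intro T hT p p' v0 u0 θ0 v u θ vx vt ux ut uxx θx θt θxx hP hpm hpI sol hED t ht
  have h01 : (0:ℝ) ≤ 1 := zero_le_one
  have h0T : (0:ℝ) ∈ Icc (0:ℝ) T := left_mem_Icc.2 hT.le
  have hTT : T ∈ Icc (0:ℝ) T := right_mem_Icc.2 hT.le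
  have hsubI : Icc (0:ℝ) T ⊆ Ici 0 := fun s hs => hs.1
  have hp'c : ContinuousOn p' (Ici 0) := hP.2.1
  have hppos : ∀ s ∈ Ici (0:ℝ), 0 < p s := hP.2.2
  have mkII : ∀ {f : ℝ → ℝ}, ContinuousOn f (Icc 0 1) → IntervalIntegrable f volume 0 1 := by
    intro f hf
    rw [← uIcc_of_le h01] at hf
    exact hf.intervalIntegrable
  have mkIIt : ∀ {f : ℝ → ℝ} {τ : ℝ}, τ ∈ Icc (0:ℝ) T → ContinuousOn f (Icc 0 T) →
      IntervalIntegrable f volume 0 τ := by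
    intro f τ hτ hf
    have : ContinuousOn f (uIcc 0 τ) := by
      rw [uIcc_of_le hτ.1]; exact hf.mono (Icc_subset_Icc le_rfl hτ.2)
    exact this.intervalIntegrable
  -- master identity
  have key : ∀ τ ∈ Icc (0:ℝ) T,
      (∫ x in (0:ℝ)..1, (u x τ ^ 2 / 2 + (θ x τ - Real.log (θ x τ)) + (p τ * v x τ - Real.log (v x τ)))) + (∫ s in (0:ℝ)..τ, (∫ x in (0:ℝ)..1, (θ x s ^ β * θx x s ^ 2 / (v x s * θ x s ^ 2) + ux x s ^ 2 / (v x s * θ x s)))) = (∫ x in (0:ℝ)..1, (u x 0 ^ 2 / 2 + (θ x 0 - Real.log (θ x 0)) + (p 0 * v x 0 - Real.log (v x 0)))) + ∫ s in (0:ℝ)..τ, p' s * (∫ x in (0:ℝ)..1, v x s) :=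
    fun τ hτ => master hT hP sol hτ
  -- positivity of basic quantities
  have hW_nn : ∀ s ∈ Icc (0:ℝ) T, 0 ≤ (∫ x in (0:ℝ)..1, v x s) := by
    intro s hs
    exact intervalIntegral.integral_nonneg h01 (fun x hx => (sol.v_pos x hx s hs).le)
  have hVf_nn : ∀ s ∈ Icc (0:ℝ) T, 0 ≤ (∫ x in (0:ℝ)..1, (θ x s ^ β * θx x s ^ 2 / (v x s * θ x s ^ 2) + ux x s ^ 2 / (v x s * θ x s))) := by
    intro s hs
    apply intervalIntegral.integral_nonneg h01
    intro x hx
    have hv := sol.v_pos x hx s hs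
    have hθ := sol.θ_pos x hx s hs
    exact add_nonneg
      (div_nonneg (mul_nonneg (Real.rpow_nonneg hθ.le β) (sq_nonneg _))
        (mul_nonneg hv.le (pow_nonneg hθ.le 2)))
      (div_nonneg (sq_nonneg _) (mul_nonneg hv.le hθ.le))
  have hVint_nn : ∀ τ ∈ Icc (0:ℝ) T, 0 ≤ ∫ s in (0:ℝ)..τ, (∫ x in (0:ℝ)..1, (θ x s ^ β * θx x s ^ 2 / (v x s * θ x s ^ 2) + ux x s ^ 2 / (v x s * θ x s))) := by
    intro τ hτ
    exact intervalIntegral.integral_nonneg hτ.1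
      (fun s hs => hVf_nn s ⟨hs.1, hs.2.trans hτ.2⟩)
  -- continuity of the parametric integrals
  have cW : ContinuousOn (fun s => (∫ x in (0:ℝ)..1, v x s)) (Icc 0 T) := cont_param sol.cont_v
  -- the energy at time τ is bounded below
  have hlow : ∀ τ ∈ Icc (0:ℝ) T,
      m / 2 * (∫ x in (0:ℝ)..1, v x τ) + (2 + Real.log (m / 2)) ≤ (∫ x in (0:ℝ)..1, (u x τ ^ 2 / 2 + (θ x τ - Real.log (θ x τ)) + (p τ * v x τ - Real.log (v x τ)))) := by
    intro τ hτ
    have hvneτ : ∀ x ∈ Icc (0:ℝ) 1, 0 < v x τ := fun x hx => sol.v_pos x hx τ hτ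
    have hθneτ : ∀ x ∈ Icc (0:ℝ) 1, 0 < θ x τ := fun x hx => sol.θ_pos x hx τ hτ
    have hgcτ : ContinuousOn (fun x => u x τ ^ 2 / 2 + (θ x τ - Real.log (θ x τ))
        + (p τ * v x τ - Real.log (v x τ))) (Icc 0 1) := by
      exact ((((sliceX sol.cont_u hτ).pow 2).div_const 2).add
        ((sliceX sol.cont_θ hτ).sub ((sliceX sol.cont_θ hτ).log
          (fun x hx => (hθneτ x hx).ne')))).add
        ((continuousOn_const.mul (sliceX sol.cont_v hτ)).sub
          ((sliceX sol.cont_v hτ).log (fun x hx => (hvneτ x hx).ne')))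
    have hmono : (∫ x in (0:ℝ)..1, (m / 2 * v x τ + (2 + Real.log (m / 2)))) ≤ (∫ x in (0:ℝ)..1, (u x τ ^ 2 / 2 + (θ x τ - Real.log (θ x τ)) + (p τ * v x τ - Real.log (v x τ)))) := by
      apply intervalIntegral.integral_mono_on (f := fun x => m / 2 * v x τ + (2 + Real.log (m / 2))) h01
        (mkII ((continuousOn_const.mul (sliceX sol.cont_v hτ)).add continuousOn_const))
        (mkII hgcτ)
      intro x hx
      have hv := hvneτ x hx
      have hθ := hθneτ x hx
      have h1 : (1:ℝ) ≤ θ x τ - Real.log (θ x τ) := one_le_sub_log hθ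
      have h2 : m / 2 * v x τ + (1 + Real.log (m / 2)) ≤ m * v x τ - Real.log (v x τ) :=
        half_lin_le hm hv
      have h3 : m * v x τ ≤ p τ * v x τ :=
        mul_le_mul_of_nonneg_right (hpm τ hτ).1 hv.le
      nlinarith [sq_nonneg (u x τ)]
    have hcomp : (∫ x in (0:ℝ)..1, (m / 2 * v x τ + (2 + Real.log (m / 2))))
        = m / 2 * (∫ x in (0:ℝ)..1, v x τ) + (2 + Real.log (m / 2)) := by
      rw [intervalIntegral.integral_add (f := fun x => m / 2 * v x τ) (g := fun _ => 2 + Real.log (m / 2)) (mkII (continuousOn_const.mul (sliceX sol.cont_v hτ)))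
        intervalIntegrable_const, intervalIntegral.integral_const_mul,
        intervalIntegral.integral_const]
      simp
    linarith [hmono, hcomp.symm.le, hcomp.le]
  -- bound on the initial energy
  have hGg0le : (∫ x in (0:ℝ)..1, (u x 0 ^ 2 / 2 + (θ x 0 - Real.log (θ x 0)) + (p 0 * v x 0 - Real.log (v x 0)))) ≤ A₀ - 1 := by
    have hEq0 : (∫ x in (0:ℝ)..1, (u x 0 ^ 2 / 2 + (θ x 0 - Real.log (θ x 0)) + (p 0 * v x 0 - Real.log (v x 0)))) = ∫ x in (0:ℝ)..1, (u0 x ^ 2 / 2 + (θ0 x - Real.log (θ0 x))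
        + (p 0 * v0 x - Real.log (v0 x))) := by
      apply intervalIntegral.integral_congr
      intro x hx
      rw [uIcc_of_le h01] at hx
      simp only
      rw [sol.init_u x hx, sol.init_v x hx, sol.init_θ x hx]
    have cu0 : ContinuousOn u0 (Icc 0 1) :=
      (sliceX sol.cont_u h0T).congr (fun x hx => (sol.init_u x hx).symm)
    have cv0 : ContinuousOn v0 (Icc 0 1) :=
      (sliceX sol.cont_v h0T).congr (fun x hx => (sol.init_v x hx).symm)
    have cθ0 : ContinuousOn θ0 (Icc 0 1) :=
      (sliceX sol.cont_θ h0T).congr (fun x hx => (sol.init_θ x hx).symm)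
    have cux0 : ContinuousOn (fun x => ux x 0) (Icc 0 1) := sliceX sol.cont_ux h0T
    have cvx0 : ContinuousOn (fun x => vx x 0) (Icc 0 1) := sliceX sol.cont_vx h0T
    have cθx0 : ContinuousOn (fun x => θx x 0) (Icc 0 1) := sliceX sol.cont_θx h0T
    obtain ⟨hH1, hv0δ, hθ0δ⟩ := hED
    have hnn1 : 0 ≤ H1norm v0 (fun x => vx x 0) := Real.sqrt_nonneg _
    have hnn2 : 0 ≤ H1norm u0 (fun x => ux x 0) := Real.sqrt_nonneg _
    have hnn3 : 0 ≤ H1norm θ0 (fun x => θx x 0) := Real.sqrt_nonneg _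
    have hu0E : (∫ x in (0:ℝ)..1, u0 x ^ 2) ≤ E ^ 2 := H1_L2 cu0 cux0 (by linarith)
    have hv0E : (∫ x in (0:ℝ)..1, v0 x ^ 2) ≤ E ^ 2 := H1_L2 cv0 cvx0 (by linarith)
    have hθ0E : (∫ x in (0:ℝ)..1, θ0 x ^ 2) ≤ E ^ 2 := H1_L2 cθ0 cθx0 (by linarith)
    have hptw : ∀ x ∈ Icc (0:ℝ) 1, u0 x ^ 2 / 2 + (θ0 x - Real.log (θ0 x))
        + (p 0 * v0 x - Real.log (v0 x))
        ≤ u0 x ^ 2 / 2 + θ0 x ^ 2 / 2 + M / 2 * v0 x ^ 2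
          + (1 / 2 + M / 2 + 2 * |Real.log δ|) := by
      intro x hx
      have hθ0p : 0 < θ0 x := hδ.trans_le (hθ0δ x hx)
      have hv0p : 0 < v0 x := hδ.trans_le (hv0δ x hx)
      have hlogθ : Real.log δ ≤ Real.log (θ0 x) := Real.log_le_log hδ (hθ0δ x hx)
      have hlogv : Real.log δ ≤ Real.log (v0 x) := Real.log_le_log hδ (hv0δ x hx)
      have habs : -|Real.log δ| ≤ Real.log δ := neg_abs_le _
      have hp0M : p 0 ≤ M := (hpm 0 h0T).2
      have hpv : p 0 * v0 x ≤ M * v0 x := mul_le_mul_of_nonneg_right hp0M hv0p.le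
      nlinarith [sq_nonneg (θ0 x - 1), sq_nonneg (v0 x - 1), hM.le]
    have hintO : (∫ x in (0:ℝ)..1, (u0 x ^ 2 / 2 + θ0 x ^ 2 / 2 + M / 2 * v0 x ^ 2
        + (1 / 2 + M / 2 + 2 * |Real.log δ|)))
        = (∫ x in (0:ℝ)..1, u0 x ^ 2) / 2 + (∫ x in (0:ℝ)..1, θ0 x ^ 2) / 2
          + M / 2 * (∫ x in (0:ℝ)..1, v0 x ^ 2) + (1 / 2 + M / 2 + 2 * |Real.log δ|) := by
      rw [intervalIntegral.integral_add (f := fun x => u0 x ^ 2 / 2 + θ0 x ^ 2 / 2 + M / 2 * v0 x ^ 2) (g := fun _ => 1 / 2 + M / 2 + 2 * |Real.log δ|) (mkII ((((cu0.pow 2).div_const 2).add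
            ((cθ0.pow 2).div_const 2)).add (continuousOn_const.mul (cv0.pow 2))))
          intervalIntegrable_const,
        intervalIntegral.integral_add (f := fun x => u0 x ^ 2 / 2 + θ0 x ^ 2 / 2) (g := fun x => M / 2 * v0 x ^ 2) (mkII (((cu0.pow 2).div_const 2).add
            ((cθ0.pow 2).div_const 2))) (mkII (continuousOn_const.mul (cv0.pow 2))),
        intervalIntegral.integral_add (f := fun x => u0 x ^ 2 / 2) (g := fun x => θ0 x ^ 2 / 2) (mkII ((cu0.pow 2).div_const 2))
          (mkII ((cθ0.pow 2).div_const 2)),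
        intervalIntegral.integral_div, intervalIntegral.integral_div,
        intervalIntegral.integral_const_mul, intervalIntegral.integral_const]
      simp
    have hmono2 : (∫ x in (0:ℝ)..1, (u0 x ^ 2 / 2 + (θ0 x - Real.log (θ0 x))
        + (p 0 * v0 x - Real.log (v0 x))))
        ≤ ∫ x in (0:ℝ)..1, (u0 x ^ 2 / 2 + θ0 x ^ 2 / 2 + M / 2 * v0 x ^ 2
          + (1 / 2 + M / 2 + 2 * |Real.log δ|)) := by
      apply intervalIntegral.integral_mono_on h01
      · apply mkII
        exact (((cu0.pow 2).div_const 2).add (cθ0.sub (cθ0.log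
            (fun x hx => (hδ.trans_le (hθ0δ x hx)).ne')))).add
          ((continuousOn_const.mul cv0).sub (cv0.log
            (fun x hx => (hδ.trans_le (hv0δ x hx)).ne')))
      · apply mkII
        exact ((((cu0.pow 2).div_const 2).add ((cθ0.pow 2).div_const 2)).add
          (continuousOn_const.mul (cv0.pow 2))).add continuousOn_const
      · exact hptw
    rw [hEq0]
    have hMexp : M / 2 * (∫ x in (0:ℝ)..1, v0 x ^ 2) ≤ M / 2 * E ^ 2 :=
      mul_le_mul_of_nonneg_left hv0E (by linarith)
    rw [hA₀def]
    linarith [hmono2, hintO.le, hintO.symm.le]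

  -- Gronwall setup
  have hGgle : ∀ τ ∈ Icc (0:ℝ) T,
      (∫ x in (0:ℝ)..1, (u x τ ^ 2 / 2 + (θ x τ - Real.log (θ x τ)) + (p τ * v x τ - Real.log (v x τ)))) ≤ (A₀ - 1) + ∫ s in (0:ℝ)..τ, p' s * (∫ x in (0:ℝ)..1, v x s) := by
    intro τ hτ
    have hk := key τ hτ
    have hv := hVint_nn τ hτ
    linarith [hGg0le]
  have hpW_J : ∀ τ ∈ Icc (0:ℝ) T, (∫ s in (0:ℝ)..τ, p' s * (∫ x in (0:ℝ)..1, v x s))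
      ≤ ∫ s in (0:ℝ)..τ, |p' s| * (∫ x in (0:ℝ)..1, v x s) := by
    intro τ hτ
    apply intervalIntegral.integral_mono_on hτ.1
      (mkIIt hτ ((hp'c.mono hsubI).mul cW))
      (mkIIt hτ (((hp'c.mono hsubI).abs).mul cW))
    intro s hs
    exact mul_le_mul_of_nonneg_right (le_abs_self _) (hW_nn s ⟨hs.1, hs.2.trans hτ.2⟩)
  have hWle : ∀ s ∈ Icc (0:ℝ) T,
      (∫ x in (0:ℝ)..1, v x s) ≤ B + c₁ * ∫ σ in (0:ℝ)..s, |p' σ| * (∫ x in (0:ℝ)..1, v x σ) := by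
    intro s hs
    have h1 := hlow s hs
    have h2 := hGgle s hs
    have h3 := hpW_J s hs
    have hKk : -(2 + Real.log (m / 2)) ≤ K := by rw [hKdef]; exact neg_le_abs _
    have h4 : m / 2 * (∫ x in (0:ℝ)..1, v x s) ≤ A₀ + K + ∫ σ in (0:ℝ)..s, |p' σ| * (∫ x in (0:ℝ)..1, v x σ) := by
      linarith
    have hcm : c₁ * (m / 2) = 1 := by rw [hc₁def]; field_simp
    have h5 := mul_le_mul_of_nonneg_left h4 hc₁.le
    have h6 : c₁ * (m / 2 * (∫ x in (0:ℝ)..1, v x s)) = (∫ x in (0:ℝ)..1, v x s) := by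
      rw [← mul_assoc, hcm, one_mul]
    have h7 : c₁ * (A₀ + K + ∫ σ in (0:ℝ)..s, |p' σ| * (∫ x in (0:ℝ)..1, v x σ))
        = c₁ * A₀ + c₁ * K + c₁ * ∫ σ in (0:ℝ)..s, |p' σ| * (∫ x in (0:ℝ)..1, v x σ) := by
      ring
    rw [hBdef]
    linarith [h5, h6, h7]
  have hgron := gronwall_aux hT hc₁ hB cW ((hp'c.mono hsubI).abs)
    (fun s _ => abs_nonneg (p' s)) hWle hpI
  have hJt : (∫ s in (0:ℝ)..t, |p' s| * (∫ x in (0:ℝ)..1, v x s)) ≤ Jm := by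
    rw [hJmdef]; exact hgron t ht
  have hJT : (∫ s in (0:ℝ)..T, |p' s| * (∫ x in (0:ℝ)..1, v x s)) ≤ Jm := by
    rw [hJmdef]; exact hgron T hTT
  have hGgt : (∫ x in (0:ℝ)..1, (u x t ^ 2 / 2 + (θ x t - Real.log (θ x t)) + (p t * v x t - Real.log (v x t)))) ≤ A₀ - 1 + Jm := by
    linarith [hGgle t ht, hpW_J t ht, hJt]
  have hWt : (∫ x in (0:ℝ)..1, v x t) ≤ B + c₁ * Jm := by
    have h1 := hWle t ht
    have h2 := mul_le_mul_of_nonneg_left hJt hc₁.le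
    linarith
  have hVT : (∫ s in (0:ℝ)..T, (∫ x in (0:ℝ)..1, (θ x s ^ β * θx x s ^ 2 / (v x s * θ x s ^ 2) + ux x s ^ 2 / (v x s * θ x s)))) ≤ A₀ + Jm + K := by
    have hk := key T hTT
    have hl := hlow T hTT
    have hWTnn := hW_nn T hTT
    have hKk : -(2 + Real.log (m / 2)) ≤ K := by rw [hKdef]; exact neg_le_abs _
    have hmw : 0 ≤ m / 2 * (∫ x in (0:ℝ)..1, v x T) := mul_nonneg (by linarith) hWTnn
    linarith [hpW_J T hTT, hJT, hGg0le]
  -- compare the target energy with GG t + W t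
  have hvpt : ∀ x ∈ Icc (0:ℝ) 1, 0 < v x t := fun x hx => sol.v_pos x hx t ht
  have hθpt : ∀ x ∈ Icc (0:ℝ) 1, 0 < θ x t := fun x hx => sol.θ_pos x hx t ht
  have hgct : ContinuousOn (fun x => u x t ^ 2 / 2 + (θ x t - Real.log (θ x t))
      + (p t * v x t - Real.log (v x t))) (Icc 0 1) := by
    exact ((((sliceX sol.cont_u ht).pow 2).div_const 2).add
      ((sliceX sol.cont_θ ht).sub ((sliceX sol.cont_θ ht).log
        (fun x hx => (hθpt x hx).ne')))).add
      ((continuousOn_const.mul (sliceX sol.cont_v ht)).sub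
        ((sliceX sol.cont_v ht).log (fun x hx => (hvpt x hx).ne')))
  have hTc : ContinuousOn (fun x => (u x t) ^ 2 / 2 + (v x t - Real.log (v x t))
      + (θ x t - Real.log (θ x t))) (Icc 0 1) := by
    exact ((((sliceX sol.cont_u ht).pow 2).div_const 2).add
      ((sliceX sol.cont_v ht).sub ((sliceX sol.cont_v ht).log
        (fun x hx => (hvpt x hx).ne')))).add
      ((sliceX sol.cont_θ ht).sub ((sliceX sol.cont_θ ht).log
        (fun x hx => (hθpt x hx).ne')))
  have hFt : (∫ x in (0:ℝ)..1, ((u x t) ^ 2 / 2 + (v x t - Real.log (v x t))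
      + (θ x t - Real.log (θ x t)))) ≤ (∫ x in (0:ℝ)..1, (u x t ^ 2 / 2 + (θ x t - Real.log (θ x t)) + (p t * v x t - Real.log (v x t)))) + (∫ x in (0:ℝ)..1, v x t) := by
    have hmono : (∫ x in (0:ℝ)..1, ((u x t) ^ 2 / 2 + (v x t - Real.log (v x t))
        + (θ x t - Real.log (θ x t))))
        ≤ ∫ x in (0:ℝ)..1, ((u x t ^ 2 / 2 + (θ x t - Real.log (θ x t))
            + (p t * v x t - Real.log (v x t))) + v x t) := by
      apply intervalIntegral.integral_mono_on (g := fun x => (u x t ^ 2 / 2 + (θ x t - Real.log (θ x t))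
            + (p t * v x t - Real.log (v x t))) + v x t) h01 (mkII hTc)
        (mkII (hgct.add (sliceX sol.cont_v ht)))
      intro x hx
      have hv := hvpt x hx
      have hpt : 0 < p t := hppos t ht.1
      nlinarith [mul_pos hpt hv]
    have hsplit : (∫ x in (0:ℝ)..1, ((u x t ^ 2 / 2 + (θ x t - Real.log (θ x t))
        + (p t * v x t - Real.log (v x t))) + v x t)) = (∫ x in (0:ℝ)..1, (u x t ^ 2 / 2 + (θ x t - Real.log (θ x t)) + (p t * v x t - Real.log (v x t)))) + (∫ x in (0:ℝ)..1, v x t) :=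
      intervalIntegral.integral_add (mkII hgct) (mkII (sliceX sol.cont_v ht))
    linarith
  linarith [hFt, hGgt, hWt, hVT]
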